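/- (Location of the Bayesian-optimal one-stage selection relative to demographic parity.) For x in the feasible set X = {x ∈ (0,1) : (α₁ − p_A x)/p_B ∈ (0,1)}, let t_A(x), t_B(x) be the unique reals with Φ^c(t_A(x)) = x and Φ^c(t_B(x)) = (α₁ − p_A x)/p_B, and define N(x) = p_A·φ(t_A(x))/s_A + p_B·φ(t_B(x))/s_B. If α₁ < 1/2 then N is strictly decreasing on X ∩ [α₁, 1), and every maximizer x* of N over X satisfies x* < α₁; if α₁ > 1/2 then N is strictly increasing on X ∩ (0, α₁], and every maximizer x* of N over X satisfies x* > α₁. (The Bayesian-optimal selection picks the high-variance group A at a rate strictly below α₁ when α₁ < 1/2 and strictly above α₁ when α₁ > 1/2.) -/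

import Mathlib

open MeasureTheory Set

/-- Standard normal density. -/
noncomputable def phi (t : ℝ) : ℝ := Real.exp (-t ^ 2 / 2) / Real.sqrt (2 * Real.pi)

/-- Standard normal CDF. -/
noncomputable def Phi (t : ℝ) : ℝ := ∫ u in Set.Iic t, phi u

/-- Standard normal complementary CDF. -/
noncomputable def Phic (t : ℝ) : ℝ := 1 - Phi t


lemma phi_pos (t : ℝ) : 0 < phi t := by
  have h2 : 0 < Real.sqrt (2 * Real.pi) := Real.sqrt_pos.2 (by positivity)
  exact div_pos (Real.exp_pos _) h2

lemma phi_le_one (t : ℝ) : phi t ≤ 1 := by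
  have h1 : Real.exp (-t ^ 2 / 2) ≤ 1 := Real.exp_le_one_iff.2 (by nlinarith [sq_nonneg t])
  have h2 : (1:ℝ) ≤ Real.sqrt (2 * Real.pi) := by
    rw [show (1:ℝ) = Real.sqrt 1 by simp]
    exact Real.sqrt_le_sqrt (by nlinarith [Real.pi_gt_three])
  calc phi t ≤ 1 / Real.sqrt (2 * Real.pi) := by
        apply div_le_div_of_nonneg_right h1 ?_ |>.trans_eq rfl
        · linarith
      _ ≤ 1 := by rw [div_le_one (by linarith)]; exact h2

lemma continuous_phi : Continuous phi := by
  unfold phi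
  fun_prop

lemma integrable_phi : Integrable phi := by
  have h := integrable_exp_neg_mul_sq (show (0:ℝ) < 1/2 by norm_num)
  have : phi = fun x => Real.exp (-(1/2) * x ^ 2) * (1 / Real.sqrt (2 * Real.pi)) := by
    funext x; unfold phi; ring_nf
  rw [this]
  exact h.mul_const _

lemma integral_phi : ∫ t, phi t = 1 := by
  have h := integral_gaussian (1/2 : ℝ)
  have heq : ∀ x : ℝ, Real.exp (-(1/2 : ℝ) * x ^ 2) = Real.exp (-x ^ 2 / 2) := by
    intro x; ring_nf
  rw [show (fun x : ℝ => Real.exp (-(1/2:ℝ) * x ^ 2)) = fun x => Real.exp (-x^2/2) from funext heq] at h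
  have hsq : Real.sqrt (Real.pi / (1/2 : ℝ)) = Real.sqrt (2 * Real.pi) := by norm_num; ring_nf
  unfold phi
  rw [integral_div, h, hsq, div_self (by positivity)]

lemma Phi_sub (a b : ℝ) : Phi b - Phi a = ∫ t in a..b, phi t := by
  exact intervalIntegral.integral_Iic_sub_Iic integrable_phi.integrableOn integrable_phi.integrableOn

lemma Phi_strictMono : StrictMono Phi := by
  intro a b hab
  have h : 0 < ∫ t in a..b, phi t :=
    intervalIntegral.intervalIntegral_pos_of_pos_on
      (continuous_phi.intervalIntegrable a b) (fun t _ => phi_pos t) hab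
  have := Phi_sub a b
  linarith

lemma Phi_pos (t : ℝ) : 0 < Phi t := by
  have h : 0 < ∫ u in (t-1)..t, phi u :=
    intervalIntegral.intervalIntegral_pos_of_pos_on
      (continuous_phi.intervalIntegrable _ _) (fun u _ => phi_pos u) (by linarith)
  have h2 : 0 ≤ Phi (t-1) := by
    unfold Phi
    exact setIntegral_nonneg measurableSet_Iic fun u _ => (phi_pos u).le
  have := Phi_sub (t-1) t
  linarith

lemma Phi_lt_one (t : ℝ) : Phi t < 1 := by
  have hsplit : Phi t + ∫ u in Ioi t, phi u = 1 := by
    rw [← integral_phi]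
    exact intervalIntegral.integral_Iic_add_Ioi integrable_phi.integrableOn integrable_phi.integrableOn
  have h : 0 < ∫ u in (t)..(t+1), phi u :=
    intervalIntegral.intervalIntegral_pos_of_pos_on
      (continuous_phi.intervalIntegrable _ _) (fun u _ => phi_pos u) (by linarith)
  have hmono : (∫ u in (t)..(t+1), phi u) ≤ ∫ u in Ioi t, phi u := by
    rw [intervalIntegral.integral_of_le (by linarith)]
    apply setIntegral_mono_set integrable_phi.integrableOn
      (Filter.Eventually.of_forall fun u => (phi_pos u).le)
    exact HasSubset.Subset.eventuallyLE (fun u hu => hu.1)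
  linarith

lemma Phi_zero : Phi 0 = 1/2 := by
  have heven : ∀ x : ℝ, phi (-x) = phi x := by
    intro x; unfold phi; rw [neg_pow]; ring_nf
  have h1 : (∫ x in Iic (0:ℝ), phi x) = ∫ x in Ioi (0:ℝ), phi x := by
    calc (∫ x in Iic (0:ℝ), phi x) = ∫ x in Iic (0:ℝ), phi (-x) := by
          simp_rw [heven]
      _ = ∫ x in Ioi (-(0:ℝ)), phi x := integral_comp_neg_Iic 0 phi
      _ = ∫ x in Ioi (0:ℝ), phi x := by norm_num
  have hsplit : Phi 0 + ∫ u in Ioi (0:ℝ), phi u = 1 := by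
    rw [← integral_phi]
    exact intervalIntegral.integral_Iic_add_Ioi integrable_phi.integrableOn integrable_phi.integrableOn
  unfold Phi at *
  linarith

lemma Phic_strictAnti : StrictAnti Phic := fun a b hab => by
  unfold Phic; have := Phi_strictMono hab; linarith

lemma Phic_injective : Function.Injective Phic := Phic_strictAnti.injective

lemma Phic_pos (t : ℝ) : 0 < Phic t := by unfold Phic; have := Phi_lt_one t; linarith

lemma Phic_lt_one (t : ℝ) : Phic t < 1 := by unfold Phic; have := Phi_pos t; linarith

lemma Phic_zero : Phic 0 = 1/2 := by unfold Phic; rw [Phi_zero]; norm_num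

lemma Phic_sub (a b : ℝ) : Phic a - Phic b = ∫ t in a..b, phi t := by
  unfold Phic; have := Phi_sub a b; linarith

/-- `Phic` order reversal. -/
lemma lt_of_Phic_lt {s t : ℝ} (h : Phic s < Phic t) : t < s := by
  by_contra hc
  push_neg at hc
  rcases eq_or_lt_of_le hc with h1 | h1
  · rw [h1] at h; exact lt_irrefl _ h
  · exact absurd (Phic_strictAnti h1) (not_lt.2 h.le)

lemma le_of_Phic_le {s t : ℝ} (h : Phic s ≤ Phic t) : t ≤ s := by
  by_contra hc
  push_neg at hc
  exact absurd (Phic_strictAnti hc) (not_lt.2 h)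

lemma hasDerivAt_phi (t : ℝ) : HasDerivAt phi (-(t * phi t)) t := by
  unfold phi
  have h1 : HasDerivAt (fun x : ℝ => -x ^ 2 / 2) (-t) t := by
    have := ((hasDerivAt_pow 2 t).neg).div_const 2
    simpa using this.congr_deriv (by push_cast; ring)
  have h2 : HasDerivAt (fun x : ℝ => Real.exp (-x ^ 2 / 2)) (Real.exp (-t^2/2) * (-t)) t :=
    (Real.hasDerivAt_exp _).comp t h1
  have := h2.div_const (Real.sqrt (2 * Real.pi))
  exact this.congr_deriv (by ring)

lemma phi_diff_eq (a b : ℝ) : phi a - phi b = ∫ t in a..b, t * phi t := by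
  have h : ∀ t ∈ uIcc a b, HasDerivAt (fun x => -phi x) (t * phi t) t := by
    intro t _
    have h' := (hasDerivAt_phi t).neg
    rw [neg_neg] at h'
    exact h'
  have hint : IntervalIntegrable (fun t => t * phi t) volume a b :=
    (continuous_id.mul continuous_phi).intervalIntegrable a b
  have := intervalIntegral.integral_eq_sub_of_hasDerivAt h hint
  rw [this]; ring

/-- Upper comparison: if `b ≤ c` then `φ(a) - φ(b) ≤ c (Φ^c(a) - Φ^c(b))` for `a ≤ b`. -/
lemma phi_diff_le {a b c : ℝ} (hab : a ≤ b) (hbc : b ≤ c) :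
    phi a - phi b ≤ c * (Phic a - Phic b) := by
  rw [phi_diff_eq, Phic_sub, ← intervalIntegral.integral_const_mul]
  apply intervalIntegral.integral_mono_on hab
    ((continuous_id.mul continuous_phi).intervalIntegrable a b)
    ((continuous_const.mul continuous_phi).intervalIntegrable a b)
  intro t ht
  exact mul_le_mul_of_nonneg_right (ht.2.trans hbc) (phi_pos t).le

/-- Lower comparison: if `c ≤ a` then `c (Φ^c(a) - Φ^c(b)) ≤ φ(a) - φ(b)` for `a ≤ b`. -/
lemma le_phi_diff {a b c : ℝ} (hab : a ≤ b) (hca : c ≤ a) :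
    c * (Phic a - Phic b) ≤ phi a - phi b := by
  rw [phi_diff_eq, Phic_sub, ← intervalIntegral.integral_const_mul]
  apply intervalIntegral.integral_mono_on hab
    ((continuous_const.mul continuous_phi).intervalIntegrable a b)
    ((continuous_id.mul continuous_phi).intervalIntegrable a b)
  intro t ht
  exact mul_le_mul_of_nonneg_right (hca.trans ht.1) (phi_pos t).le

/-- `Phic` is 1-Lipschitz (downward). -/
lemma Phic_sub_le {a b : ℝ} (hab : a ≤ b) : Phic a - Phic b ≤ b - a := by
  rw [Phic_sub]
  calc (∫ t in a..b, phi t) ≤ ∫ t in a..b, (1:ℝ) :=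
        intervalIntegral.integral_mono_on hab (continuous_phi.intervalIntegrable a b)
          (intervalIntegrable_const) (fun t _ => phi_le_one t)
    _ = b - a := by simp

/-- Generic combination estimate for the difference of `N` values. -/
lemma Ndiff_lower {sA sB pA q1 q2 r1 r2 cA cB Δ : ℝ}
    (hsA : 0 < sA) (hsB : 0 < sB) (hpA : 0 < pA) (hpB : 0 < 1 - pA)
    (hA : cA * Δ ≤ q2 - q1)
    (hB : cB * (pA * Δ) ≤ (1 - pA) * (r2 - r1))
    (hcmp : 0 < pA * Δ * (cA / sA + cB / sB)) :
    pA * q1 / sA + (1 - pA) * r1 / sB < pA * q2 / sA + (1 - pA) * r2 / sB := by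
  rw [← sub_pos]
  have e : pA * q2 / sA + (1 - pA) * r2 / sB - (pA * q1 / sA + (1 - pA) * r1 / sB)
      = pA * (q2 - q1) / sA + ((1 - pA) * (r2 - r1)) / sB := by ring
  rw [e]
  have h1 : pA * (cA * Δ) / sA ≤ pA * (q2 - q1) / sA := by gcongr
  have h2 : (cB * (pA * Δ)) / sB ≤ ((1 - pA) * (r2 - r1)) / sB := by gcongr
  have e2 : pA * (cA * Δ) / sA + (cB * (pA * Δ)) / sB = pA * Δ * (cA / sA + cB / sB) := by
    field_simp
  linarith

/-- Feasible first-stage selection fractions `x` for group `A`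
(with `p_B = 1 - p_A`). -/
def feas (pA α₁ : ℝ) : Set ℝ :=
  {x : ℝ | x ∈ Set.Ioo (0 : ℝ) 1 ∧ (α₁ - pA * x) / (1 - pA) ∈ Set.Ioo (0 : ℝ) 1}

/-- `N(x) = p_A φ(t_A(x))/s_A + p_B φ(t_B(x))/s_B`, where `t_A(x), t_B(x)` are
the standardized thresholds selecting fractions `x` and `(α₁ - p_A x)/p_B`. -/
noncomputable def Nfun (σW σA σB pA : ℝ) (tA tB : ℝ → ℝ) (x : ℝ) : ℝ :=
  pA * phi (tA x) / Real.sqrt (σW ^ 2 + σA ^ 2)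
    + (1 - pA) * phi (tB x) / Real.sqrt (σW ^ 2 + σB ^ 2)

set_option maxHeartbeats 1000000 in
/-- Location of the Bayesian-optimal one-stage selection fraction relative to
demographic parity: for `α₁ < 1/2`, `N` is strictly decreasing on `X ∩ [α₁, 1)`
and every maximizer of `N` over `X` is `< α₁`; for `α₁ > 1/2`, `N` is strictly
increasing on `X ∩ (0, α₁]` and every maximizer of `N` over `X` is `> α₁`. -/
theorem bayesian_optimal_location_one_stage
    (μ σW σA σB pA α₁ : ℝ) (tA tB : ℝ → ℝ)
    (hσW : 0 < σW) (hσB : 0 ≤ σB) (hσAB : σB < σA)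
    (hpA : pA ∈ Set.Ioo (0 : ℝ) 1) (hα : α₁ ∈ Set.Ioo (0 : ℝ) 1)
    (htA : ∀ x ∈ feas pA α₁, Phic (tA x) = x)
    (htB : ∀ x ∈ feas pA α₁, Phic (tB x) = (α₁ - pA * x) / (1 - pA)) :
    (α₁ < 1 / 2 →
      StrictAntiOn (Nfun σW σA σB pA tA tB) (feas pA α₁ ∩ Set.Ico α₁ 1) ∧
      ∀ x ∈ feas pA α₁,
        (∀ y ∈ feas pA α₁, Nfun σW σA σB pA tA tB y ≤ Nfun σW σA σB pA tA tB x) →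
        x < α₁) ∧
    (1 / 2 < α₁ →
      StrictMonoOn (Nfun σW σA σB pA tA tB) (feas pA α₁ ∩ Set.Ioc 0 α₁) ∧
      ∀ x ∈ feas pA α₁,
        (∀ y ∈ feas pA α₁, Nfun σW σA σB pA tA tB y ≤ Nfun σW σA σB pA tA tB x) →
        α₁ < x) := by
  obtain ⟨hpA0, hpA1⟩ := hpA
  obtain ⟨hα0, hα1⟩ := hα
  have hpB : 0 < 1 - pA := by linarith
  have h1pA : (1 - pA) ≠ 0 := ne_of_gt hpB
  set sA := Real.sqrt (σW ^ 2 + σA ^ 2) with hsA_def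
  set sB := Real.sqrt (σW ^ 2 + σB ^ 2) with hsB_def
  have hsB0 : 0 < sB := Real.sqrt_pos.2 (by positivity)
  have hsA0 : 0 < sA := Real.sqrt_pos.2 (by positivity)
  have hsBA : sB < sA := by
    rw [hsA_def, hsB_def]
    apply Real.sqrt_lt_sqrt (by positivity)
    have : σB ^ 2 < σA ^ 2 := pow_lt_pow_left₀ hσAB hσB two_ne_zero
    linarith
  have hinv : 1 / sA < 1 / sB := one_div_lt_one_div_of_lt hsB0 hsBA
  have hyα : (α₁ - pA * α₁) / (1 - pA) = α₁ := by field_simp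
  have hα₁feas : α₁ ∈ feas pA α₁ := ⟨⟨hα0, hα1⟩, by rw [hyα]; exact ⟨hα0, hα1⟩⟩
  have ht0 : Phic (tA α₁) = α₁ := htA _ hα₁feas
  set t0 := tA α₁ with ht0_def
  have htB0 : tB α₁ = t0 := Phic_injective (by rw [htB _ hα₁feas, hyα, ht0])
  have hyx : ∀ x : ℝ, (α₁ - pA * x) / (1 - pA) - α₁ = pA * (α₁ - x) / (1 - pA) := by
    intro x; field_simp; ring
  -- strict monotonicity results
  have hdec : α₁ < 1 / 2 →
      StrictAntiOn (Nfun σW σA σB pA tA tB) (feas pA α₁ ∩ Set.Ico α₁ 1) := by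
    intro hhalf x1 hx1 x2 hx2 h12
    obtain ⟨hx1f, hx1i⟩ := hx1
    obtain ⟨hx2f, hx2i⟩ := hx2
    have t0pos : 0 < t0 := by
      apply lt_of_Phic_lt; rw [ht0, Phic_zero]; linarith
    -- A side
    have hab : tA x2 ≤ tA x1 := le_of_Phic_le (by rw [htA _ hx1f, htA _ hx2f]; exact h12.le)
    have hbc : tA x1 ≤ t0 := le_of_Phic_le (by rw [htA _ hx1f, ht0]; exact hx1i.1)
    have hA0 := phi_diff_le hab hbc
    rw [htA _ hx2f, htA _ hx1f] at hA0
    have hA' : (-t0) * (x2 - x1) ≤ phi (tA x1) - phi (tA x2) := by linarith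
    -- B side
    have hy12 : (α₁ - pA * x2) / (1 - pA) < (α₁ - pA * x1) / (1 - pA) := by
      gcongr
    have hcd : tB x1 ≤ tB x2 :=
      le_of_Phic_le (by rw [htB _ hx1f, htB _ hx2f]; exact hy12.le)
    have hy1le : (α₁ - pA * x1) / (1 - pA) ≤ α₁ := by
      have := hyx x1
      have h2 : pA * (α₁ - x1) / (1 - pA) ≤ 0 := by
        apply div_nonpos_of_nonpos_of_nonneg _ hpB.le
        have hx1ge : α₁ - x1 ≤ 0 := by linarith [hx1i.1]
        exact mul_nonpos_of_nonneg_of_nonpos hpA0.le hx1ge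
      linarith
    have hca : t0 ≤ tB x1 := le_of_Phic_le (by rw [htB _ hx1f, ht0]; exact hy1le)
    have hB0 := le_phi_diff hcd hca
    rw [htB _ hx1f, htB _ hx2f] at hB0
    have hykey : (1 - pA) * ((α₁ - pA * x1) / (1 - pA) - (α₁ - pA * x2) / (1 - pA))
        = pA * (x2 - x1) := by field_simp; ring
    have hB1 := mul_le_mul_of_nonneg_left hB0 hpB.le
    have hB' : t0 * (pA * (x2 - x1)) ≤ (1 - pA) * (phi (tB x1) - phi (tB x2)) := by
      have hykey' : t0 * ((1 - pA) * ((α₁ - pA * x1) / (1 - pA) - (α₁ - pA * x2) / (1 - pA)))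
          = t0 * (pA * (x2 - x1)) := by rw [hykey]
      linarith [hB1, hykey']
    have hcmp : 0 < pA * (x2 - x1) * ((-t0) / sA + t0 / sB) := by
      have e : (-t0) / sA + t0 / sB = t0 * (1 / sB - 1 / sA) := by ring
      apply mul_pos (mul_pos hpA0 (by linarith))
      rw [e]; exact mul_pos t0pos (by linarith)
    simp only [Nfun]
    rw [← hsA_def, ← hsB_def]
    exact Ndiff_lower hsA0 hsB0 hpA0 hpB hA' hB' hcmp
  have hinc : 1 / 2 < α₁ →
      StrictMonoOn (Nfun σW σA σB pA tA tB) (feas pA α₁ ∩ Set.Ioc 0 α₁) := by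
    intro hhalf x1 hx1 x2 hx2 h12
    obtain ⟨hx1f, hx1i⟩ := hx1
    obtain ⟨hx2f, hx2i⟩ := hx2
    have t0neg : t0 < 0 := by
      apply lt_of_Phic_lt; rw [ht0, Phic_zero]; linarith
    -- A side
    have hab : tA x2 ≤ tA x1 := le_of_Phic_le (by rw [htA _ hx1f, htA _ hx2f]; exact h12.le)
    have hca : t0 ≤ tA x2 := le_of_Phic_le (by rw [htA _ hx2f, ht0]; exact hx2i.2)
    have hA0 := le_phi_diff hab hca
    rw [htA _ hx2f, htA _ hx1f] at hA0
    have hA' : t0 * (x2 - x1) ≤ phi (tA x2) - phi (tA x1) := by linarith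
    -- B side
    have hy12 : (α₁ - pA * x2) / (1 - pA) < (α₁ - pA * x1) / (1 - pA) := by
      gcongr
    have hcd : tB x1 ≤ tB x2 :=
      le_of_Phic_le (by rw [htB _ hx1f, htB _ hx2f]; exact hy12.le)
    have hy2ge : α₁ ≤ (α₁ - pA * x2) / (1 - pA) := by
      have := hyx x2
      have h2 : 0 ≤ pA * (α₁ - x2) / (1 - pA) :=
        div_nonneg (mul_nonneg hpA0.le (by linarith [hx2i.2])) hpB.le
      linarith
    have hbc : tB x2 ≤ t0 := le_of_Phic_le (by rw [htB _ hx2f, ht0]; exact hy2ge)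
    have hB0 := phi_diff_le hcd hbc
    rw [htB _ hx1f, htB _ hx2f] at hB0
    have hykey : (1 - pA) * ((α₁ - pA * x1) / (1 - pA) - (α₁ - pA * x2) / (1 - pA))
        = pA * (x2 - x1) := by field_simp; ring
    have hB1 := mul_le_mul_of_nonneg_left hB0 hpB.le
    have hB' : (-t0) * (pA * (x2 - x1)) ≤ (1 - pA) * (phi (tB x2) - phi (tB x1)) := by
      have hykey' : t0 * ((1 - pA) * ((α₁ - pA * x1) / (1 - pA) - (α₁ - pA * x2) / (1 - pA)))
          = t0 * (pA * (x2 - x1)) := by rw [hykey]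
      linarith [hB1, hykey']
    have hcmp : 0 < pA * (x2 - x1) * (t0 / sA + (-t0) / sB) := by
      have e : t0 / sA + (-t0) / sB = (-t0) * (1 / sB - 1 / sA) := by ring
      apply mul_pos (mul_pos hpA0 (by linarith))
      rw [e]; exact mul_pos (by linarith) (by linarith)
    simp only [Nfun]
    rw [← hsA_def, ← hsB_def]
    exact Ndiff_lower hsA0 hsB0 hpA0 hpB hA' hB' hcmp
  -- a strictly better point below α₁ (case α₁ < 1/2)
  have hpt1 : α₁ < 1 / 2 → ∃ x1 ∈ feas pA α₁,
      Nfun σW σA σB pA tA tB α₁ < Nfun σW σA σB pA tA tB x1 := by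
    intro hhalf
    have t0pos : 0 < t0 := by
      apply lt_of_Phic_lt; rw [ht0, Phic_zero]; linarith
    set ε := t0 * (sA - sB) / (2 * (sA + sB)) with hε_def
    have hεpos : 0 < ε := by
      apply div_pos (mul_pos t0pos (by linarith)) (by linarith)
    have hεmul : ε * (2 * (sA + sB)) = t0 * (sA - sB) := by
      rw [hε_def]; field_simp
    have hcmp : (t0 + ε) / sA < (t0 - ε) / sB := by
      rw [div_lt_div_iff₀ hsA0 hsB0]
      have hp := mul_pos hεpos (show (0:ℝ) < sA + sB by linarith)
      linarith [hεmul, hp]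
    have hc2 : α₁ < Phic (t0 - ε) := by
      rw [← ht0]; exact Phic_strictAnti (by linarith)
    set c2 := Phic (t0 - ε) - α₁ with hc2_def
    have hc2pos : 0 < c2 := by simp only [hc2_def]; linarith
    set d1 := (1 - pA) * (1 - α₁) / pA with hd1_def
    set d2 := (1 - pA) * c2 / pA with hd2_def
    have hd1pos : 0 < d1 := div_pos (mul_pos hpB (by linarith)) hpA0
    have hd2pos : 0 < d2 := div_pos (mul_pos hpB hc2pos) hpA0
    set δ := min ε (min d1 d2) / 2 with hδ_def
    have hmin_pos : 0 < min ε (min d1 d2) := lt_min hεpos (lt_min hd1pos hd2pos)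
    have hδpos : 0 < δ := by rw [hδ_def]; linarith
    have hδε : δ ≤ ε := by
      have := min_le_left ε (min d1 d2); rw [hδ_def]; linarith
    have hδd1 : δ < d1 := by
      have h1 := min_le_right ε (min d1 d2)
      have h2 := min_le_left d1 d2
      rw [hδ_def]; linarith
    have hδd2 : δ < d2 := by
      have h1 := min_le_right ε (min d1 d2)
      have h2 := min_le_right d1 d2
      rw [hδ_def]; linarith
    set x1 := Phic (t0 + δ) with hx1_def
    have hx1pos : 0 < x1 := Phic_pos _
    have hx1lt : x1 < α₁ := by
      rw [hx1_def, ← ht0]; exact Phic_strictAnti (by linarith)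
    have hΔδ : α₁ - x1 ≤ δ := by
      have := Phic_sub_le (show t0 ≤ t0 + δ by linarith)
      rw [ht0, ← hx1_def] at this; linarith
    have hΔpos : 0 < α₁ - x1 := by linarith
    -- feasibility of x1
    have hy1α : (α₁ - pA * x1) / (1 - pA) - α₁ = pA * (α₁ - x1) / (1 - pA) := hyx x1
    have hy1gt : α₁ < (α₁ - pA * x1) / (1 - pA) := by
      have : 0 < pA * (α₁ - x1) / (1 - pA) := div_pos (mul_pos hpA0 hΔpos) hpB
      linarith
    have hy1lt1 : (α₁ - pA * x1) / (1 - pA) < 1 := by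
      have h' : pA * (α₁ - x1) < (1 - pA) * (1 - α₁) := by
        have he : pA * d1 = (1 - pA) * (1 - α₁) := by rw [hd1_def]; field_simp
        have := mul_lt_mul_of_pos_left (show α₁ - x1 < d1 by linarith) hpA0
        linarith
      have : pA * (α₁ - x1) / (1 - pA) < 1 - α₁ := by
        rw [div_lt_iff₀ hpB]; linarith [h']
      linarith
    have hx1feas : x1 ∈ feas pA α₁ :=
      ⟨⟨hx1pos, by linarith⟩, ⟨by linarith, hy1lt1⟩⟩
    have htAx1 : tA x1 = t0 + δ := Phic_injective (by rw [htA _ hx1feas, hx1_def])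
    have htBlt : tB x1 < t0 := by
      apply lt_of_Phic_lt; rw [htB _ hx1feas, ht0]; exact hy1gt
    have htBgt : t0 - ε < tB x1 := by
      apply lt_of_Phic_lt
      rw [htB _ hx1feas]
      have h' : pA * (α₁ - x1) < (1 - pA) * c2 := by
        have he : pA * d2 = (1 - pA) * c2 := by rw [hd2_def]; field_simp
        have := mul_lt_mul_of_pos_left (show α₁ - x1 < d2 by linarith) hpA0
        linarith
      have : pA * (α₁ - x1) / (1 - pA) < c2 := by
        rw [div_lt_iff₀ hpB]; linarith [h']
      simp only [hc2_def] at this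
      linarith
    -- estimates
    have hA0 := phi_diff_le (show t0 ≤ tA x1 by rw [htAx1]; linarith)
      (show tA x1 ≤ t0 + ε by rw [htAx1]; linarith)
    rw [ht0, htA _ hx1feas] at hA0
    have hA' : (-(t0 + ε)) * (α₁ - x1) ≤ phi (tA x1) - phi t0 := by linarith
    have hB0 := le_phi_diff htBlt.le htBgt.le
    rw [htB _ hx1feas, ht0] at hB0
    have hykey : (1 - pA) * ((α₁ - pA * x1) / (1 - pA) - α₁) = pA * (α₁ - x1) := by
      field_simp; ring
    have hB1 := mul_le_mul_of_nonneg_left hB0 hpB.le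
    have hB' : (t0 - ε) * (pA * (α₁ - x1)) ≤ (1 - pA) * (phi (tB x1) - phi t0) := by
      have hykey' : (t0 - ε) * ((1 - pA) * ((α₁ - pA * x1) / (1 - pA) - α₁))
          = (t0 - ε) * (pA * (α₁ - x1)) := by rw [hykey]
      linarith [hB1, hykey']
    have hcmp' : 0 < pA * (α₁ - x1) * ((-(t0 + ε)) / sA + (t0 - ε) / sB) := by
      apply mul_pos (mul_pos hpA0 hΔpos)
      have e : (-(t0 + ε)) / sA + (t0 - ε) / sB = (t0 - ε) / sB - (t0 + ε) / sA := by ring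
      rw [e]; linarith
    refine ⟨x1, hx1feas, ?_⟩
    simp only [Nfun]
    rw [← hsA_def, ← hsB_def, ← ht0_def, htB0]
    exact Ndiff_lower hsA0 hsB0 hpA0 hpB hA' hB' hcmp'
  -- a strictly better point above α₁ (case α₁ > 1/2)
  have hpt2 : 1 / 2 < α₁ → ∃ x1 ∈ feas pA α₁,
      Nfun σW σA σB pA tA tB α₁ < Nfun σW σA σB pA tA tB x1 := by
    intro hhalf
    have t0neg : t0 < 0 := by
      apply lt_of_Phic_lt; rw [ht0, Phic_zero]; linarith
    set ε := (-t0) * (sA - sB) / (2 * (sA + sB)) with hε_def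
    have hεpos : 0 < ε := by
      apply div_pos (mul_pos (by linarith) (by linarith)) (by linarith)
    have hεmul : ε * (2 * (sA + sB)) = (-t0) * (sA - sB) := by
      rw [hε_def]; field_simp
    have hcmp : (t0 + ε) / sB < (t0 - ε) / sA := by
      rw [div_lt_div_iff₀ hsB0 hsA0]
      have hp := mul_pos hεpos (show (0:ℝ) < sA + sB by linarith)
      linarith [hεmul, hp]
    have hc2 : Phic (t0 + ε) < α₁ := by
      rw [← ht0]; exact Phic_strictAnti (by linarith)
    set c2 := α₁ - Phic (t0 + ε) with hc2_def
    have hc2pos : 0 < c2 := by simp only [hc2_def]; linarith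
    set d2 := (1 - pA) * c2 / pA with hd2_def
    have hd2pos : 0 < d2 := div_pos (mul_pos hpB hc2pos) hpA0
    set δ := min ε d2 / 2 with hδ_def
    have hmin_pos : 0 < min ε d2 := lt_min hεpos hd2pos
    have hδpos : 0 < δ := by rw [hδ_def]; linarith
    have hδε : δ ≤ ε := by
      have := min_le_left ε d2; rw [hδ_def]; linarith
    have hδd2 : δ < d2 := by
      have := min_le_right ε d2; rw [hδ_def]; linarith
    set x1 := Phic (t0 - δ) with hx1_def
    have hx1lt1 : x1 < 1 := Phic_lt_one _
    have hx1gt : α₁ < x1 := by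
      rw [hx1_def, ← ht0]; exact Phic_strictAnti (by linarith)
    have hΔδ : x1 - α₁ ≤ δ := by
      have := Phic_sub_le (show t0 - δ ≤ t0 by linarith)
      rw [ht0, ← hx1_def] at this; linarith
    have hΔpos : 0 < x1 - α₁ := by linarith
    -- feasibility of x1
    have hy1α : (α₁ - pA * x1) / (1 - pA) - α₁ = pA * (α₁ - x1) / (1 - pA) := hyx x1
    have hy1lt : (α₁ - pA * x1) / (1 - pA) < α₁ := by
      have : pA * (α₁ - x1) / (1 - pA) < 0 := by
        apply div_neg_of_neg_of_pos _ hpB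
        exact mul_neg_of_pos_of_neg hpA0 (by linarith)
      linarith
    have hy1gtc : Phic (t0 + ε) < (α₁ - pA * x1) / (1 - pA) := by
      have h' : pA * (x1 - α₁) < (1 - pA) * c2 := by
        have he : pA * d2 = (1 - pA) * c2 := by rw [hd2_def]; field_simp
        have := mul_lt_mul_of_pos_left (show x1 - α₁ < d2 by linarith) hpA0
        linarith
      have h'' : pA * (x1 - α₁) / (1 - pA) < c2 := by
        rw [div_lt_iff₀ hpB]; linarith [h']
      have e : pA * (α₁ - x1) / (1 - pA) = -(pA * (x1 - α₁) / (1 - pA)) := by ring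
      rw [e] at hy1α
      simp only [hc2_def] at h''
      linarith
    have hy1pos : 0 < (α₁ - pA * x1) / (1 - pA) :=
      lt_trans (Phic_pos _) hy1gtc
    have hx1feas : x1 ∈ feas pA α₁ :=
      ⟨⟨by linarith, hx1lt1⟩, ⟨hy1pos, by linarith⟩⟩
    have htAx1 : tA x1 = t0 - δ := Phic_injective (by rw [htA _ hx1feas, hx1_def])
    have htBgt : t0 < tB x1 := by
      apply lt_of_Phic_lt; rw [htB _ hx1feas, ht0]; exact hy1lt
    have htBlt : tB x1 < t0 + ε := by
      apply lt_of_Phic_lt; rw [htB _ hx1feas]; exact hy1gtc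
    -- estimates
    have hA0 := le_phi_diff (show tA x1 ≤ t0 by rw [htAx1]; linarith)
      (show t0 - ε ≤ tA x1 by rw [htAx1]; linarith)
    rw [ht0, htA _ hx1feas] at hA0
    have hA' : (t0 - ε) * (x1 - α₁) ≤ phi (tA x1) - phi t0 := by linarith
    have hB0 := phi_diff_le htBgt.le htBlt.le
    rw [htB _ hx1feas, ht0] at hB0
    have hykey : (1 - pA) * (α₁ - (α₁ - pA * x1) / (1 - pA)) = pA * (x1 - α₁) := by
      field_simp; ring
    have hB1 := mul_le_mul_of_nonneg_left hB0 hpB.le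
    have hB' : (-(t0 + ε)) * (pA * (x1 - α₁)) ≤ (1 - pA) * (phi (tB x1) - phi t0) := by
      have hykey' : (t0 + ε) * ((1 - pA) * (α₁ - (α₁ - pA * x1) / (1 - pA)))
          = (t0 + ε) * (pA * (x1 - α₁)) := by rw [hykey]
      linarith [hB1, hykey']
    have hcmp' : 0 < pA * (x1 - α₁) * ((t0 - ε) / sA + (-(t0 + ε)) / sB) := by
      apply mul_pos (mul_pos hpA0 hΔpos)
      have e : (t0 - ε) / sA + (-(t0 + ε)) / sB = (t0 - ε) / sA - (t0 + ε) / sB := by ring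
      rw [e]; linarith
    refine ⟨x1, hx1feas, ?_⟩
    simp only [Nfun]
    rw [← hsA_def, ← hsB_def, ← ht0_def, htB0]
    exact Ndiff_lower hsA0 hsB0 hpA0 hpB hA' hB' hcmp'
  refine ⟨fun hhalf => ⟨hdec hhalf, ?_⟩, fun hhalf => ⟨hinc hhalf, ?_⟩⟩
  · intro x hx hmax
    by_contra hcon
    push_neg at hcon
    rcases eq_or_lt_of_le hcon with heq | hlt
    · obtain ⟨x1, hx1f, hgt⟩ := hpt1 hhalf
      have := hmax x1 hx1f
      rw [← heq] at this
      linarith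
    · have h1 : α₁ ∈ feas pA α₁ ∩ Set.Ico α₁ 1 := ⟨hα₁feas, le_refl _, hα1⟩
      have h2 : x ∈ feas pA α₁ ∩ Set.Ico α₁ 1 := ⟨hx, hcon, hx.1.2⟩
      have := hdec hhalf h1 h2 hlt
      have := hmax α₁ hα₁feas
      linarith
  · intro x hx hmax
    by_contra hcon
    push_neg at hcon
    rcases eq_or_lt_of_le hcon with heq | hlt
    · obtain ⟨x1, hx1f, hgt⟩ := hpt2 hhalf
      have := hmax x1 hx1f
      rw [heq] at this
      linarith
    · have h1 : x ∈ feas pA α₁ ∩ Set.Ioc 0 α₁ := ⟨hx, hx.1.1, hcon⟩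
      have h2 : α₁ ∈ feas pA α₁ ∩ Set.Ioc 0 α₁ := ⟨hα₁feas, hα0, le_refl _⟩
      have := hinc hhalf h1 h2 hlt
      have := hmax α₁ hα₁feas
      linarith
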